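/- The AISD overshoot does not scale with the link capacity: for fixed n : ℕ, k_i > 0, and k_d > 0, the two-flow AISD overshoot at time n is the same for every capacity C₁, C₂ > 1; i.e., the function sending C to the AISD overshoot at time n is constant (equal to 2*n*k_i - 2*k_d + 1). -/
import Mathlib

lemma arith_closed (f : ℕ → ℝ) (k : ℝ) (h : ∀ t, f (t+1) = f t + k) (n : ℕ) :
    f n = f 0 + n * k := by
  induction n with
  | zero => simp
  | succ m ih => rw [h, ih]; push_cast; ring

theorem aisd_overshoot_capacity_independent (n : ℕ) (k_i k_d : ℝ)
    (hki : k_i > 0) (hkd : k_d > 0) (C₁ C₂ : ℝ) (hC1 : C₁ > 1) (hC2 : C₂ > 1)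
    (f1 f2 g1 g2 : ℕ → ℝ)
    (hf1_0 : f1 0 = C₁ - k_d) (hf2_0 : f2 0 = 1 - k_d)
    (hg1_0 : g1 0 = C₂ - k_d) (hg2_0 : g2 0 = 1 - k_d)
    (hf1 : ∀ t : ℕ, f1 (t + 1) = f1 t + k_i)
    (hf2 : ∀ t : ℕ, f2 (t + 1) = f2 t + k_i)
    (hg1 : ∀ t : ℕ, g1 (t + 1) = g1 t + k_i)
    (hg2 : ∀ t : ℕ, g2 (t + 1) = g2 t + k_i) :
    f1 n + f2 n - C₁ = g1 n + g2 n - C₂ ∧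
      f1 n + f2 n - C₁ = 2 * (n : ℝ) * k_i - 2 * k_d + 1 := by
  rw [arith_closed f1 k_i hf1, arith_closed f2 k_i hf2,
      arith_closed g1 k_i hg1, arith_closed g2 k_i hg2,
      hf1_0, hf2_0, hg1_0, hg2_0]
  constructor <;> ring
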